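/- Let (φ_n) ⊂ W^{1,p}(Ω) satisfy ∫_Ω|∇φ_n|^p - λ∫_{∂Ω} g|φ_n|^p < C for some C > 0 and λ > 0, with g satisfying ∫_{∂Ω} g < 0 and G weakly sequentially continuous. If (‖∇φ_n‖_p) is bounded, then (‖φ_n‖_p) is bounded. -/

import Mathlib

open MeasureTheory Filter Set Topology

/-- Weak convergence of a sequence in a normed space. -/
def WeakConv {X : Type*} [NormedAddCommGroup X] [NormedSpace ℝ X] (u : ℕ → X) (v : X) : Prop :=
  ∀ ℓ : X →L[ℝ] ℝ, Tendsto (fun n => ℓ (u n)) atTop (𝓝 (ℓ v))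

section Helpers

variable {α : Type*} [MeasurableSpace α] {ν : MeasureTheory.Measure α} {p : ℝ}

private lemma aemeas_of_integrable_rpow (hp : 0 < p) {f : α → ℝ} (hf0 : ∀ x, 0 ≤ f x)
    (hint : Integrable (fun x => f x ^ p) ν) : AEMeasurable f ν := by
  have h1 : AEMeasurable (fun x => f x ^ p) ν := hint.aestronglyMeasurable.aemeasurable
  have h2 : AEMeasurable (fun x => (f x ^ p) ^ p⁻¹) ν := h1.pow_const _
  have h3 : (fun x => (f x ^ p) ^ p⁻¹) = f := by
    funext x
    rw [← Real.rpow_mul (hf0 x), mul_inv_cancel₀ hp.ne', Real.rpow_one]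
  rwa [h3] at h2

private lemma memLp_of_integral_rpow_ne_zero (hp : 0 < p) {f : α → ℝ} (hf0 : ∀ x, 0 ≤ f x)
    (hne : (∫ x, f x ^ p ∂ν) ≠ 0) : MemLp f (ENNReal.ofReal p) ν := by
  have hint : Integrable (fun x => f x ^ p) ν := by
    by_contra h; exact hne (integral_undef h)
  have haem : AEMeasurable f ν := aemeas_of_integrable_rpow hp hf0 hint
  have hP0 : (ENNReal.ofReal p) ≠ 0 := by
    simp only [ne_eq, ENNReal.ofReal_eq_zero, not_le]; exact hp
  have hPt : (ENNReal.ofReal p) ≠ ⊤ := ENNReal.ofReal_ne_top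
  have hiff := memLp_norm_rpow_iff (q := ENNReal.ofReal p) (p := ENNReal.ofReal p)
    haem.aestronglyMeasurable hP0 hPt
  rw [ENNReal.div_self hP0 hPt, memLp_one_iff_integrable] at hiff
  apply hiff.mp
  have : (fun x : α => ‖f x‖ ^ (ENNReal.ofReal p).toReal) = fun x => f x ^ p := by
    funext x
    rw [Real.norm_eq_abs, abs_of_nonneg (hf0 x), ENNReal.toReal_ofReal hp.le]
  rwa [this]

private lemma eLpNorm_eq_int (hp : 0 < p) {f : α → ℝ} (hf0 : ∀ x, 0 ≤ f x)
    (hf : MemLp f (ENNReal.ofReal p) ν) :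
    eLpNorm f (ENNReal.ofReal p) ν = ENNReal.ofReal ((∫ x, f x ^ p ∂ν) ^ p⁻¹) := by
  have hP0 : (ENNReal.ofReal p) ≠ 0 := by
    simp only [ne_eq, ENNReal.ofReal_eq_zero, not_le]; exact hp
  have hPt : (ENNReal.ofReal p) ≠ ⊤ := ENNReal.ofReal_ne_top
  rw [hf.eLpNorm_eq_integral_rpow_norm hP0 hPt]
  congr 1
  rw [ENNReal.toReal_ofReal hp.le]
  congr 1
  apply integral_congr_ae
  filter_upwards with x
  rw [Real.norm_eq_abs, abs_of_nonneg (hf0 x)]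

/-- A junk-value-robust scalar Minkowski inequality. -/
private lemma rpow_integral_add_le (hp : 1 ≤ p) {f g h : α → ℝ}
    (hf0 : ∀ x, 0 ≤ f x) (hg0 : ∀ x, 0 ≤ g x) (hh0 : ∀ x, 0 ≤ h x)
    (hle : ∀ x, h x ≤ f x + g x)
    (hfm : MemLp f (ENNReal.ofReal p) ν) (hgm : MemLp g (ENNReal.ofReal p) ν)
    (hhm : AEStronglyMeasurable h ν) :
    (∫ x, h x ^ p ∂ν) ^ p⁻¹ ≤ (∫ x, f x ^ p ∂ν) ^ p⁻¹ + (∫ x, g x ^ p ∂ν) ^ p⁻¹ := by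
  have hp0 : 0 < p := lt_of_lt_of_le one_pos hp
  have hP1 : 1 ≤ ENNReal.ofReal p := ENNReal.one_le_ofReal.mpr hp
  have hbound : ∀ᵐ x ∂ν, ‖h x‖ ≤ ‖(f + g) x‖ := by
    filter_upwards with x
    rw [Real.norm_eq_abs, Real.norm_eq_abs, abs_of_nonneg (hh0 x), Pi.add_apply,
      abs_of_nonneg (add_nonneg (hf0 x) (hg0 x))]
    exact hle x
  have hhm' : MemLp h (ENNReal.ofReal p) ν := (hfm.add hgm).of_le hhm hbound
  have key : eLpNorm h (ENNReal.ofReal p) ν ≤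
      eLpNorm f (ENNReal.ofReal p) ν + eLpNorm g (ENNReal.ofReal p) ν :=
    le_trans (eLpNorm_mono_ae hbound)
      (eLpNorm_add_le hfm.aestronglyMeasurable hgm.aestronglyMeasurable hP1)
  rw [eLpNorm_eq_int hp0 hh0 hhm', eLpNorm_eq_int hp0 hf0 hfm, eLpNorm_eq_int hp0 hg0 hgm,
    ← ENNReal.ofReal_add (Real.rpow_nonneg (integral_nonneg fun x => Real.rpow_nonneg (hf0 x) p) _)
      (Real.rpow_nonneg (integral_nonneg fun x => Real.rpow_nonneg (hg0 x) p) _)] at key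
  exact (ENNReal.ofReal_le_ofReal_iff
    (add_nonneg (Real.rpow_nonneg (integral_nonneg fun x => Real.rpow_nonneg (hf0 x) p) _)
      (Real.rpow_nonneg (integral_nonneg fun x => Real.rpow_nonneg (hg0 x) p) _))).mp key

end Helpers

set_option maxHeartbeats 2000000 in
/-- If a sequence `(φ_n) ⊂ W^{1,p}(Ω)` satisfies
`∫_Ω|∇φ_n|^p - λ∫_{∂Ω} g|φ_n|^p < C` for some `C > 0` and `λ > 0`, with `∫_{∂Ω} g < 0`
and `G` weakly sequentially continuous, and `(‖∇φ_n‖_p)` is bounded, then `(‖φ_n‖_p)` is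
bounded.  Here `X` models `W^{1,p}(Ω)` with gradient `D`, inclusion `I` and trace `Tr`. -/
theorem Lp_bounded_of_gradient_bounded
    {X Ω B : Type*} [NormedAddCommGroup X] [NormedSpace ℝ X]
    [MeasurableSpace Ω] [MeasurableSpace B]
    (μ : Measure Ω) [IsFiniteMeasure μ] (σ : Measure B) [IsFiniteMeasure σ]
    (N : ℕ) (p : ℝ) (hp : 1 < p)
    (D : X →ₗ[ℝ] Ω → EuclideanSpace ℝ (Fin N)) (I : X →ₗ[ℝ] Ω → ℝ) (Tr : X →ₗ[ℝ] B → ℝ)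
    (g : B → ℝ) (hg : Integrable g σ) (hgneg : (∫ x, g x ∂σ) < 0)
    -- weak sequential continuity of `G`:
    (hGweak : ∀ (u : ℕ → X) (v : X), WeakConv u v →
      Tendsto (fun n => ∫ x, g x * |Tr (u n) x| ^ p ∂σ) atTop
        (𝓝 (∫ x, g x * |Tr v x| ^ p ∂σ)))
    -- `W^{1,p}`-norm identity:
    (hnorm : ∀ φ : X, ‖φ‖ ^ p = (∫ x, ‖D φ x‖ ^ p ∂μ) + ∫ x, |I φ x| ^ p ∂μ)
    -- reflexivity:
    (hreflex : ∀ u : ℕ → X, (∃ R : ℝ, ∀ n, ‖u n‖ ≤ R) →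
      ∃ (v : X) (s : ℕ → ℕ), StrictMono s ∧ WeakConv (u ∘ s) v)
    -- compact embedding `W^{1,p}(Ω) ↪↪ L^p(Ω)`:
    (hcpt : ∀ (u : ℕ → X) (v : X), WeakConv u v →
      Tendsto (fun n => ∫ x, |I (u n) x - I v x| ^ p ∂μ) atTop (𝓝 0))
    -- gradient-free functions are constants on the connected domain:
    (hconst : ∀ φ : X, (∫ x, ‖D φ x‖ ^ p ∂μ) = 0 →
      ∃ c : ℝ, (∀ᵐ x ∂μ, I φ x = c) ∧ ∀ᵐ x ∂σ, Tr φ x = c)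
    (φ : ℕ → X) (C lam : ℝ) (hC : 0 < C) (hlam : 0 < lam)
    (hbound : ∀ n, (∫ x, ‖D (φ n) x‖ ^ p ∂μ) -
      lam * (∫ x, g x * |Tr (φ n) x| ^ p ∂σ) < C)
    (hgrad : ∃ M : ℝ, ∀ n, (∫ x, ‖D (φ n) x‖ ^ p ∂μ) ≤ M) :
    ∃ M' : ℝ, ∀ n, (∫ x, |I (φ n) x| ^ p ∂μ) ≤ M' := by
  classical
  by_contra hcon
  push_neg at hcon
  have hp0 : 0 < p := lt_trans one_pos hp
  have hp0' : p ≠ 0 := ne_of_gt hp0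
  -- abbreviations
  set E : X → ℝ := fun z => ∫ a, ‖D z a‖ ^ p ∂μ with hEdef
  set F : X → ℝ := fun z => ∫ a, |I z a| ^ p ∂μ with hFdef
  set Gf : X → ℝ := fun z => ∫ a, g a * |Tr z a| ^ p ∂σ with hGdef
  have hEnn : ∀ z, 0 ≤ E z := fun z => integral_nonneg fun a => Real.rpow_nonneg (norm_nonneg _) p
  have hFnn : ∀ z, 0 ≤ F z := fun z => integral_nonneg fun a => Real.rpow_nonneg (abs_nonneg _) p
  have hnorm' : ∀ z : X, ‖z‖ ^ p = E z + F z := hnorm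
  have hcon' : ∀ M' : ℝ, ∃ n, M' < F (φ n) := hcon
  obtain ⟨M, hM⟩ := hgrad
  have hM' : ∀ n, E (φ n) ≤ M := hM
  have hMnn : 0 ≤ M := le_trans (hEnn (φ 0)) (hM' 0)
  have hbound' : ∀ n, E (φ n) - lam * Gf (φ n) < C := hbound
  have hconst' : ∀ z : X, E z = 0 → ∃ c : ℝ, (∀ᵐ x ∂μ, I z x = c) ∧ ∀ᵐ x ∂σ, Tr z x = c := hconst
  -- the "constants must vanish" lemma
  have hwin : ∀ z : X, E z = 0 → 0 ≤ Gf z → z = 0 := by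
    intro z hEz hGz
    obtain ⟨c, hIc, hTc⟩ := hconst' z hEz
    have hGz' : Gf z = (∫ x, g x ∂σ) * |c| ^ p := by
      have h1 : Gf z = ∫ x, g x * |c| ^ p ∂σ :=
        integral_congr_ae (hTc.mono fun x hx => by simp only [hx])
      rw [h1, integral_mul_const]
    have hc : c = 0 := by
      by_contra hc0
      have h1 : 0 < |c| ^ p := Real.rpow_pos_of_pos (abs_pos.mpr hc0) p
      nlinarith [hGz' ▸ hGz]
    have hFz : F z = 0 := by
      have h2 : F z = ∫ x, |(0:ℝ)| ^ p ∂μ :=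
        integral_congr_ae (hIc.mono fun x hx => by simp only [hx, hc])
      simpa [abs_zero, Real.zero_rpow hp0'] using h2
    have hz : ‖z‖ ^ p = 0 := by rw [hnorm' z, hEz, hFz, add_zero]
    have hz' : ‖z‖ = 0 := by
      by_contra h
      have := Real.rpow_pos_of_pos (lt_of_le_of_ne (norm_nonneg z) (Ne.symm h)) p
      linarith
    exact norm_eq_zero.mp hz'
  -- select a subsequence with F (ψ k) > k
  have hsel : ∀ k : ℕ, ∃ n, (k : ℝ) < F (φ n) := fun k => hcon' k
  choose nn hnn using hsel
  set ψ : ℕ → X := fun k => φ (nn k) with hψdef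
  have hFψ : ∀ k : ℕ, (k : ℝ) < F (ψ k) := hnn
  have hψnorm : ∀ k : ℕ, (k : ℝ) < ‖ψ k‖ ^ p := by
    intro k
    have h1 := hnorm' (ψ k)
    have h2 := hEnn (ψ k)
    linarith [hFψ k]
  have hψpos : ∀ k, 0 < ‖ψ k‖ := by
    intro k
    rcases (norm_nonneg (ψ k)).lt_or_eq with h | h
    · exact h
    · exfalso
      have h1 := hψnorm k
      rw [← h, Real.zero_rpow hp0'] at h1
      have : (0:ℝ) ≤ k := Nat.cast_nonneg k
      linarith
  -- the normalized sequence
  set w : ℕ → X := fun k => (‖ψ k‖)⁻¹ • ψ k with hwdef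
  have hwnorm : ∀ k, ‖w k‖ = 1 := by
    intro k
    rw [hwdef]
    simp only [norm_smul, Real.norm_eq_abs, abs_of_nonneg (inv_nonneg.mpr (norm_nonneg (ψ k)))]
    exact inv_mul_cancel₀ (ne_of_gt (hψpos k))
  -- scaling identities
  have hE_smul : ∀ (t : ℝ), 0 ≤ t → ∀ z : X, E (t • z) = t ^ p * E z := by
    intro t ht z
    have h1 : (fun a => ‖D (t • z) a‖ ^ p) = fun a => t ^ p * ‖D z a‖ ^ p := by
      funext a
      rw [LinearMap.map_smul, Pi.smul_apply, norm_smul, Real.norm_eq_abs, abs_of_nonneg ht,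
        Real.mul_rpow ht (norm_nonneg _)]
    show (∫ a, ‖D (t • z) a‖ ^ p ∂μ) = t ^ p * E z
    rw [h1, integral_const_mul]
  have hG_smul : ∀ (t : ℝ), 0 ≤ t → ∀ z : X, Gf (t • z) = t ^ p * Gf z := by
    intro t ht z
    have h1 : (fun a => g a * |Tr (t • z) a| ^ p) = fun a => t ^ p * (g a * |Tr z a| ^ p) := by
      funext a
      rw [LinearMap.map_smul, Pi.smul_apply, smul_eq_mul, abs_mul, abs_of_nonneg ht,
        Real.mul_rpow ht (abs_nonneg _)]
      ring
    show (∫ a, g a * |Tr (t • z) a| ^ p ∂σ) = t ^ p * Gf z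
    rw [h1, integral_const_mul]
  have hrp : ∀ k, (‖ψ k‖⁻¹) ^ p = (‖ψ k‖ ^ p)⁻¹ := fun k => Real.inv_rpow (norm_nonneg _) p
  have hinvle : ∀ k : ℕ, 1 ≤ k → (‖ψ k‖ ^ p)⁻¹ ≤ 1 / (k : ℝ) := by
    intro k hk
    rw [one_div]
    have hkpos : (0:ℝ) < k := by exact_mod_cast hk
    exact inv_anti₀ hkpos (hψnorm k).le
  have hEw_le : ∀ k : ℕ, 1 ≤ k → E (w k) ≤ M / k := by
    intro k hk
    have h1 : E (w k) = (‖ψ k‖ ^ p)⁻¹ * E (ψ k) := by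
      rw [hwdef]; rw [hE_smul _ (inv_nonneg.mpr (norm_nonneg _)) (ψ k), hrp]
    rw [h1, div_eq_mul_inv, mul_comm M]
    have h2 : (‖ψ k‖ ^ p)⁻¹ ≤ ((k:ℝ))⁻¹ := by
      have := hinvle k hk; rwa [one_div] at this
    have h3 : E (ψ k) ≤ M := hM' (nn k)
    have h4 : (0:ℝ) ≤ (‖ψ k‖ ^ p)⁻¹ := inv_nonneg.mpr (Real.rpow_nonneg (norm_nonneg _) p)
    calc (‖ψ k‖ ^ p)⁻¹ * E (ψ k) ≤ (‖ψ k‖ ^ p)⁻¹ * M :=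
          mul_le_mul_of_nonneg_left h3 h4
      _ ≤ ((k:ℝ))⁻¹ * M := mul_le_mul_of_nonneg_right h2 hMnn
  have hGw_ge : ∀ k : ℕ, 1 ≤ k → -(C / lam) / k ≤ Gf (w k) := by
    intro k hk
    have h0 : -(C / lam) ≤ Gf (ψ k) := by
      have hb := hbound' (nn k)
      have hE := hEnn (ψ k)
      rw [neg_le, le_div_iff₀ hlam]
      nlinarith
    have h1 : Gf (w k) = (‖ψ k‖ ^ p)⁻¹ * Gf (ψ k) := by
      rw [hwdef]; rw [hG_smul _ (inv_nonneg.mpr (norm_nonneg _)) (ψ k), hrp]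
    have h4 : (0:ℝ) ≤ (‖ψ k‖ ^ p)⁻¹ := inv_nonneg.mpr (Real.rpow_nonneg (norm_nonneg _) p)
    have h2 : (‖ψ k‖ ^ p)⁻¹ * (-(C / lam)) ≤ Gf (w k) := by
      rw [h1]; exact mul_le_mul_of_nonneg_left h0 h4
    have h5 : -(C / lam) ≤ 0 := by
      have : 0 < C / lam := div_pos hC hlam
      linarith
    have h6 : (‖ψ k‖ ^ p)⁻¹ ≤ 1 / (k:ℝ) := hinvle k hk
    have h7 : (1 / (k:ℝ)) * (-(C / lam)) ≤ (‖ψ k‖ ^ p)⁻¹ * (-(C / lam)) :=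
      mul_le_mul_of_nonpos_right h6 h5
    have h8 : -(C / lam) / (k:ℝ) = (1 / (k:ℝ)) * (-(C / lam)) := by ring
    linarith
  -- extract a weakly convergent subsequence
  obtain ⟨v, s, hs, hWC⟩ := hreflex w ⟨1, fun k => le_of_eq (hwnorm k)⟩
  set u : ℕ → X := w ∘ s with hudef
  have hunorm : ∀ k, ‖u k‖ = 1 := fun k => hwnorm (s k)
  have hsk : ∀ k : ℕ, k ≤ s k := fun k => hs.le_apply
  have hEu0 : Tendsto (fun k => E (u k)) atTop (𝓝 0) := by
    apply squeeze_zero' (Eventually.of_forall fun k => hEnn (u k))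
    · filter_upwards [eventually_ge_atTop 1] with k hk
      have h1 : E (u k) ≤ M / (s k) := hEw_le (s k) (le_trans hk (hsk k))
      have hkpos : (0:ℝ) < (k:ℝ) := by exact_mod_cast hk
      have hks : (k:ℝ) ≤ (s k:ℝ) := by exact_mod_cast hsk k
      have h2 : M / (s k : ℝ) ≤ M / (k : ℝ) :=
        div_le_div_of_nonneg_left hMnn hkpos hks
      exact le_trans h1 h2
    · exact tendsto_const_div_atTop_nhds_zero_nat M
  have hFu : ∀ k, F (u k) = 1 - E (u k) := by
    intro k
    have h := hnorm' (u k)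
    rw [hunorm k, Real.one_rpow] at h
    linarith
  have hFu1 : Tendsto (fun k => F (u k)) atTop (𝓝 1) := by
    have h : Tendsto (fun k => 1 - E (u k)) atTop (𝓝 (1 - 0)) :=
      tendsto_const_nhds.sub hEu0
    rw [sub_zero] at h
    exact h.congr fun k => (hFu k).symm
  have hcp : Tendsto (fun k => ∫ x, |I (u k) x - I v x| ^ p ∂μ) atTop (𝓝 0) := hcpt u v hWC
  have hGu : Tendsto (fun k => Gf (u k)) atTop (𝓝 (Gf v)) := hGweak u v hWC
  have hGv : 0 ≤ Gf v := by
    have h1 : Tendsto (fun k : ℕ => -(C / lam) / k) atTop (𝓝 0) :=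
      tendsto_const_div_atTop_nhds_zero_nat _
    refine le_of_tendsto_of_tendsto h1 hGu ?_
    filter_upwards [eventually_ge_atTop 1] with k hk
    have h2 := hGw_ge (s k) (le_trans hk (hsk k))
    have h3 : -(C / lam) / (s k : ℝ) ≤ Gf (u k) := h2
    have h4 : -(C / lam) / (k : ℝ) ≤ -(C / lam) / (s k : ℝ) := by
      have hkpos : (0:ℝ) < (k:ℝ) := by exact_mod_cast hk
      have hks : (k:ℝ) ≤ (s k:ℝ) := by exact_mod_cast hsk k
      rw [neg_div, neg_div, neg_le_neg_iff]
      exact div_le_div_of_nonneg_left (le_of_lt (div_pos hC hlam)) hkpos hks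
    linarith
  have hvne : v ≠ 0 := by
    intro h0
    have h := hcpt u 0 (h0 ▸ hWC)
    have heq : (fun k => ∫ x, |I (u k) x - I (0:X) x| ^ p ∂μ) = fun k => F (u k) := by
      funext k
      show (∫ x, |I (u k) x - I (0:X) x| ^ p ∂μ) = ∫ a, |I (u k) a| ^ p ∂μ
      simp [map_zero]
    rw [heq] at h
    have : (1:ℝ) = 0 := tendsto_nhds_unique hFu1 h
    norm_num at this
  -- main step : E v = 0
  have hEv : E v = 0 := by
    by_contra hEvne
    have hEvpos : 0 < E v := (hEnn v).lt_of_ne (Ne.symm hEvne)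
    obtain ⟨ℓ, hℓ1, hℓv⟩ := exists_dual_vector ℝ v (norm_ne_zero_iff.mpr hvne)
    have hℓv' : ℓ v = ‖v‖ := by simpa using hℓv
    have hℓu : Tendsto (fun k => ℓ (u k)) atTop (𝓝 ‖v‖) := by
      have h := hWC ℓ
      rwa [hℓv'] at h
    have hvle : ‖v‖ ≤ 1 := by
      refine le_of_tendsto hℓu ?_
      filter_upwards with k
      calc ℓ (u k) ≤ |ℓ (u k)| := le_abs_self _
        _ = ‖ℓ (u k)‖ := (Real.norm_eq_abs _).symm
        _ ≤ ‖ℓ‖ * ‖u k‖ := ℓ.le_opNorm (u k)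
        _ = 1 := by rw [hℓ1, hunorm k, one_mul]
    have hvpos : 0 < ‖v‖ := norm_pos_iff.mpr hvne
    have hEvle : E v ≤ ‖v‖ ^ p := by
      have h1 := hnorm' v
      have h2 := hFnn v
      linarith
    have hEvroot : (E v) ^ p⁻¹ ≤ ‖v‖ := by
      have h1 : (E v) ^ p⁻¹ ≤ (‖v‖ ^ p) ^ p⁻¹ :=
        Real.rpow_le_rpow (hEnn v) hEvle (inv_nonneg.mpr hp0.le)
      rwa [← Real.rpow_mul (norm_nonneg v), mul_inv_cancel₀ hp0', Real.rpow_one] at h1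
    by_cases hfreq : ∃ᶠ k in atTop, E (u k) = 0
    · -- frequently zero gradient: the limit would have a nonzero constant trace
      obtain ⟨t, ht, htE⟩ := Filter.extraction_of_frequently_atTop hfreq
      have hcs : ∀ j, ∃ c : ℝ, (∀ᵐ x ∂μ, I (u (t j)) x = c) ∧ ∀ᵐ x ∂σ, Tr (u (t j)) x = c :=
        fun j => hconst' _ (htE j)
      choose c hIc hTc using hcs
      have hFc : ∀ j, F (u (t j)) = |c j| ^ p * (μ univ).toReal := by
        intro j
        have h1 : F (u (t j)) = ∫ x, |c j| ^ p ∂μ :=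
          integral_congr_ae ((hIc j).mono fun x hx => by simp only [hx])
        rw [h1, integral_const, smul_eq_mul, mul_comm]; rfl
      have hGc : ∀ j, Gf (u (t j)) = |c j| ^ p * ∫ x, g x ∂σ := by
        intro j
        have h1 : Gf (u (t j)) = ∫ x, g x * |c j| ^ p ∂σ :=
          integral_congr_ae ((hTc j).mono fun x hx => by simp only [hx])
        rw [h1, integral_mul_const, mul_comm]
      have h1 : Tendsto (fun j => |c j| ^ p * (μ univ).toReal) atTop (𝓝 1) := by
        have h := hFu1.comp ht.tendsto_atTop
        exact h.congr fun j => hFc j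
      have h2 : Tendsto (fun j => |c j| ^ p * ∫ x, g x ∂σ) atTop (𝓝 (Gf v)) := by
        have h := hGu.comp ht.tendsto_atTop
        exact h.congr fun j => hGc j
      set m := (μ univ).toReal with hmdef
      have hm0 : m ≠ 0 := by
        intro h
        have h3 : Tendsto (fun j => |c j| ^ p * m) atTop (𝓝 0) := by
          simp only [h, mul_zero]
          exact tendsto_const_nhds
        have := tendsto_nhds_unique h1 h3
        norm_num at this
      have hmpos : 0 < m := (ENNReal.toReal_nonneg).lt_of_ne (Ne.symm hm0)
      have h3 : Tendsto (fun j => |c j| ^ p) atTop (𝓝 (1 / m)) := by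
        have h4 := h1.div_const m
        have h5 : (fun j => |c j| ^ p * m / m) = fun j => |c j| ^ p := by
          funext j; field_simp
        rwa [h5] at h4
      have h6 : Tendsto (fun j => |c j| ^ p * ∫ x, g x ∂σ) atTop
          (𝓝 ((1 / m) * ∫ x, g x ∂σ)) := h3.mul_const _
      have h7 : Gf v = (1 / m) * ∫ x, g x ∂σ := tendsto_nhds_unique h2 h6
      have h8 : (1 / m) * (∫ x, g x ∂σ) < 0 :=
        mul_neg_of_pos_of_neg (by positivity) hgneg
      rw [h7] at hGv
      linarith
    · -- eventually nonzero gradients: honest Minkowski applies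
      have hev : ∀ᶠ k in atTop, 0 < E (u k) :=
        (not_frequently.mp hfreq).mono fun k h => (hEnn (u k)).lt_of_ne (Ne.symm h)
      have hEu_small : ∀ᶠ k in atTop, E (u k) ^ p⁻¹ ≤ ‖v‖ / 4 := by
        have h1 : Tendsto (fun k => E (u k) ^ p⁻¹) atTop (𝓝 0) := by
          have h := hEu0.rpow_const (Or.inr (inv_nonneg.mpr hp0.le))
          rwa [Real.zero_rpow (inv_ne_zero hp0')] at h
        have h2 : (0:ℝ) < ‖v‖ / 4 := by positivity
        filter_upwards [h1.eventually_const_lt (by linarith : (-1:ℝ) < 0),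
          (h1.eventually_lt_const h2 : ∀ᶠ k in atTop, E (u k) ^ p⁻¹ < ‖v‖/4)] with k _ hk2
        exact hk2.le
      have hl_big : ∀ᶠ k in atTop, ‖v‖ / 2 ≤ ℓ (u k) := by
        have h1 : ‖v‖ / 2 < ‖v‖ := by linarith
        filter_upwards [hℓu.eventually_const_lt h1] with k hk
        exact hk.le
      have hFu_pos : ∀ᶠ k in atTop, 0 < F (u k) := by
        filter_upwards [hFu1.eventually_const_lt (by norm_num : (1:ℝ)/2 < 1)] with k hk
        linarith
      -- MemLp of the gradient norm of v
      have hDv : MemLp (fun a => ‖D v a‖) (ENNReal.ofReal p) μ :=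
        memLp_of_integral_rpow_ne_zero hp0 (fun a => norm_nonneg _) hEvne
      -- positivity of F (u k + θ • v)
      have key : ∀ θ : ℝ, 0 < θ → ∀ k, 0 < E (u k) → E (u k) ^ p⁻¹ ≤ ‖v‖ / 4 →
          ‖v‖ / 2 ≤ ℓ (u k) → 0 < F (u k + θ • v) := by
        intro θ hθ k hEk hEk4 hlk
        have hnormlow : ((1/2 : ℝ) + θ) * ‖v‖ ≤ ‖u k + θ • v‖ := by
          have h1 : ℓ (u k + θ • v) = ℓ (u k) + θ * ‖v‖ := by
            rw [map_add, ContinuousLinearMap.map_smul, smul_eq_mul, hℓv']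
          have h2 : ℓ (u k + θ • v) ≤ ‖u k + θ • v‖ := by
            calc ℓ (u k + θ • v) ≤ |ℓ (u k + θ • v)| := le_abs_self _
              _ = ‖ℓ (u k + θ • v)‖ := (Real.norm_eq_abs _).symm
              _ ≤ ‖ℓ‖ * ‖u k + θ • v‖ := ℓ.le_opNorm _
              _ = ‖u k + θ • v‖ := by rw [hℓ1, one_mul]
          nlinarith
        have hupper : E (u k + θ • v) ≤ ((1/4 + θ) * ‖v‖) ^ p := by
          rcases (hEnn (u k + θ • v)).lt_or_eq with hpos | h0
          · -- honest Minkowski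
            have hfm : MemLp (fun a => ‖D (u k) a‖) (ENNReal.ofReal p) μ :=
              memLp_of_integral_rpow_ne_zero hp0 (fun a => norm_nonneg _) (ne_of_gt hEk)
            have hgm : MemLp (fun a => θ * ‖D v a‖) (ENNReal.ofReal p) μ := hDv.const_mul θ
            have hhmem : MemLp (fun a => ‖D (u k + θ • v) a‖) (ENNReal.ofReal p) μ :=
              memLp_of_integral_rpow_ne_zero hp0 (fun a => norm_nonneg _) (ne_of_gt hpos)
            have hle : ∀ a, ‖D (u k + θ • v) a‖ ≤ ‖D (u k) a‖ + θ * ‖D v a‖ := by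
              intro a
              have h1 : D (u k + θ • v) a = D (u k) a + θ • D v a := by
                rw [map_add, LinearMap.map_smul]; rfl
              rw [h1]
              refine (norm_add_le _ _).trans ?_
              rw [norm_smul, Real.norm_eq_abs, abs_of_pos hθ]
            have hmink := rpow_integral_add_le hp.le (fun a => norm_nonneg (D (u k) a))
              (fun a => mul_nonneg hθ.le (norm_nonneg _)) (fun a => norm_nonneg _)
              hle hfm hgm hhmem.aestronglyMeasurable
            have hθDv : (∫ a, (θ * ‖D v a‖) ^ p ∂μ) = θ ^ p * E v := by
              have h2 : (fun a => (θ * ‖D v a‖) ^ p) = fun a => θ ^ p * ‖D v a‖ ^ p := by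
                funext a; rw [Real.mul_rpow hθ.le (norm_nonneg _)]
              rw [h2, integral_const_mul]
            have hb2 : (θ ^ p * E v) ^ p⁻¹ = θ * (E v) ^ p⁻¹ := by
              rw [Real.mul_rpow (Real.rpow_nonneg hθ.le p) (hEnn v),
                ← Real.rpow_mul hθ.le, mul_inv_cancel₀ hp0', Real.rpow_one]
            have h3 : E (u k + θ • v) ^ p⁻¹ ≤ (1/4 + θ) * ‖v‖ := by
              have h4 : E (u k + θ • v) ^ p⁻¹ ≤ E (u k) ^ p⁻¹ + θ * (E v) ^ p⁻¹ := by
                have := hmink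
                rw [hθDv, hb2] at this
                exact this
              have h5 : θ * (E v) ^ p⁻¹ ≤ θ * ‖v‖ :=
                mul_le_mul_of_nonneg_left hEvroot hθ.le
              calc E (u k + θ • v) ^ p⁻¹ ≤ E (u k) ^ p⁻¹ + θ * (E v) ^ p⁻¹ := h4
                _ ≤ ‖v‖ / 4 + θ * ‖v‖ := add_le_add hEk4 h5
                _ = (1/4 + θ) * ‖v‖ := by ring
            calc E (u k + θ • v) = (E (u k + θ • v) ^ p⁻¹) ^ p := by
                  rw [← Real.rpow_mul (hEnn _), inv_mul_cancel₀ hp0', Real.rpow_one]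
              _ ≤ ((1/4 + θ) * ‖v‖) ^ p :=
                  Real.rpow_le_rpow (Real.rpow_nonneg (hEnn _) _) h3 hp0.le
          · rw [← h0]
            exact Real.rpow_nonneg (by positivity) p
        have hlow' : ((1/2 + θ) * ‖v‖) ^ p ≤ ‖u k + θ • v‖ ^ p :=
          Real.rpow_le_rpow (by positivity) hnormlow hp0.le
        have hstrict : ((1/4 + θ) * ‖v‖) ^ p < ((1/2 + θ) * ‖v‖) ^ p := by
          apply Real.rpow_lt_rpow (by positivity) _ hp0
          nlinarith
        have hnid := hnorm' (u k + θ • v)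
        linarith
      -- helper to rewrite F (u k + θ • v)
      have hIθ : ∀ (θ : ℝ) (k : ℕ),
          F (u k + θ • v) = ∫ x, |I (u k) x + θ * I v x| ^ p ∂μ := by
        intro θ k
        show (∫ a, |I (u k + θ • v) a| ^ p ∂μ) = ∫ x, |I (u k) x + θ * I v x| ^ p ∂μ
        apply integral_congr_ae
        filter_upwards with a
        rw [map_add, LinearMap.map_smul, Pi.add_apply, Pi.smul_apply, smul_eq_mul]
      -- pointwise algebraic identities
      have habs1 : ∀ a b : ℝ, |b| = Real.sqrt ((|a + 2*b|^2 - 2*|a + b|^2 + |a|^2)/2) := by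
        intro a b
        rw [show (|a + 2*b|^2 - 2*|a + b|^2 + |a|^2)/2 = b^2 by
          rw [sq_abs, sq_abs, sq_abs]; ring]
        exact (Real.sqrt_sq_eq_abs b).symm
      have habs2 : ∀ a b : ℝ, |a - b| =
          Real.sqrt (3*|a|^2 - 3*|a + b|^2 + |a + 2*b|^2) := by
        intro a b
        rw [show 3*|a|^2 - 3*|a + b|^2 + |a + 2*b|^2 = (a - b)^2 by
          rw [sq_abs, sq_abs, sq_abs]; ring]
        exact (Real.sqrt_sq_eq_abs _).symm
      -- the eventual bundle of facts
      have hbundle : ∀ᶠ k in atTop, 0 < E (u k) ∧ E (u k) ^ p⁻¹ ≤ ‖v‖ / 4 ∧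
          ‖v‖ / 2 ≤ ℓ (u k) ∧ 0 < F (u k) :=
        hev.and (hEu_small.and (hl_big.and hFu_pos))
      -- main consequences for bundled k
      have hmain : ∀ k, (0 < E (u k) ∧ E (u k) ^ p⁻¹ ≤ ‖v‖ / 4 ∧
          ‖v‖ / 2 ≤ ℓ (u k) ∧ 0 < F (u k)) →
          (AEMeasurable (fun x => |I (u k) x|) μ ∧
            MemLp (fun x => |I (u k) x|) (ENNReal.ofReal p) μ) ∧
          (AEMeasurable (fun x => |I (u k) x + 1 * I v x|) μ ∧
            MemLp (fun x => |I (u k) x + 1 * I v x|) (ENNReal.ofReal p) μ) ∧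
          (AEMeasurable (fun x => |I (u k) x + 2 * I v x|) μ ∧
            MemLp (fun x => |I (u k) x + 2 * I v x|) (ENNReal.ofReal p) μ) := by
        intro k hk
        obtain ⟨hk1, hk2, hk3, hk4⟩ := hk
        have hF1 : 0 < ∫ x, |I (u k) x + 1 * I v x| ^ p ∂μ := by
          rw [← hIθ 1 k]; exact key 1 one_pos k hk1 hk2 hk3
        have hF2 : 0 < ∫ x, |I (u k) x + 2 * I v x| ^ p ∂μ := by
          rw [← hIθ 2 k]; exact key 2 two_pos k hk1 hk2 hk3
        have hFk : (∫ x, |I (u k) x| ^ p ∂μ) ≠ 0 := ne_of_gt hk4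
        have m0 : MemLp (fun x => |I (u k) x|) (ENNReal.ofReal p) μ :=
          memLp_of_integral_rpow_ne_zero hp0 (fun x => abs_nonneg _) hFk
        have m1 : MemLp (fun x => |I (u k) x + 1 * I v x|) (ENNReal.ofReal p) μ :=
          memLp_of_integral_rpow_ne_zero hp0 (fun x => abs_nonneg _) (ne_of_gt hF1)
        have m2 : MemLp (fun x => |I (u k) x + 2 * I v x|) (ENNReal.ofReal p) μ :=
          memLp_of_integral_rpow_ne_zero hp0 (fun x => abs_nonneg _) (ne_of_gt hF2)
        exact ⟨⟨m0.aestronglyMeasurable.aemeasurable, m0⟩,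
          ⟨m1.aestronglyMeasurable.aemeasurable, m1⟩,
          ⟨m2.aestronglyMeasurable.aemeasurable, m2⟩⟩
      -- measurability and MemLp of |I v|
      obtain ⟨k0, hk0⟩ := hbundle.exists
      obtain ⟨⟨aA0, mA0⟩, ⟨aB10, mB10⟩, ⟨aB20, mB20⟩⟩ := hmain k0 hk0
      have hq_eq : (fun x => |I v x|) = fun x =>
          Real.sqrt ((|I (u k0) x + 2 * I v x|^2 - 2*|I (u k0) x + 1 * I v x|^2
            + |I (u k0) x|^2)/2) := by
        funext x
        have := habs1 (I (u k0) x) (I v x)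
        rw [this]
        norm_num
      have aq : AEMeasurable (fun x => |I v x|) μ := by
        rw [hq_eq]
        have hcomb : AEMeasurable (fun x => (|I (u k0) x + 2 * I v x|^2
            - 2*|I (u k0) x + 1 * I v x|^2 + |I (u k0) x|^2)/2) μ :=
          (((aB20.pow_const 2).sub ((aB10.pow_const 2).const_mul 2)).add
            (aA0.pow_const 2)).div_const 2
        exact (Real.continuous_sqrt.measurable.comp_aemeasurable hcomb)
      have mq : MemLp (fun x => |I v x|) (ENNReal.ofReal p) μ := by
        refine MemLp.of_le (mA0.add mB10) aq.aestronglyMeasurable ?_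
        filter_upwards with x
        have hnn2 : (0:ℝ) ≤ |I (u k0) x| + |I (u k0) x + 1 * I v x| := by positivity
        rw [Real.norm_eq_abs, abs_abs, Pi.add_apply, Real.norm_eq_abs,
          abs_of_nonneg hnn2]
        calc |I v x| = |(I (u k0) x + 1 * I v x) - I (u k0) x| := by
              rw [show (I (u k0) x + 1 * I v x) - I (u k0) x = I v x by ring]
          _ ≤ |I (u k0) x + 1 * I v x| + |I (u k0) x| := abs_sub _ _
          _ = |I (u k0) x| + |I (u k0) x + 1 * I v x| := by ring
      -- eventual Minkowski inequality
      have hineq : ∀ᶠ k in atTop, F (u k) ^ p⁻¹ ≤ (∫ x, |I v x| ^ p ∂μ) ^ p⁻¹ +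
          (∫ x, |I (u k) x - I v x| ^ p ∂μ) ^ p⁻¹ := by
        filter_upwards [hbundle] with k hk
        obtain ⟨⟨aA, mA⟩, ⟨aB1, mB1⟩, ⟨aB2, mB2⟩⟩ := hmain k hk
        -- measurability of |I (u k) - I v|
        have hh_eq : (fun x => |I (u k) x - I v x|) = fun x =>
            Real.sqrt (3*|I (u k) x|^2 - 3*|I (u k) x + 1 * I v x|^2
              + |I (u k) x + 2 * I v x|^2) := by
          funext x
          have := habs2 (I (u k) x) (I v x)
          rw [this]
          norm_num
        have ah : AEMeasurable (fun x => |I (u k) x - I v x|) μ := by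
          rw [hh_eq]
          have hcomb : AEMeasurable (fun x => 3*|I (u k) x|^2
              - 3*|I (u k) x + 1 * I v x|^2 + |I (u k) x + 2 * I v x|^2) μ :=
            (((aA.pow_const 2).const_mul 3).sub ((aB1.pow_const 2).const_mul 3)).add
              (aB2.pow_const 2)
          exact (Real.continuous_sqrt.measurable.comp_aemeasurable hcomb)
        -- Minkowski : |I (u k)| ≤ |I v| + |I (u k) - I v|
        have hmink := rpow_integral_add_le hp.le (fun x => abs_nonneg (I v x))
          (fun x => abs_nonneg (I (u k) x - I v x)) (fun x => abs_nonneg (I (u k) x))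
          (fun x => by
            calc |I (u k) x| = |I v x + (I (u k) x - I v x)| := by
                  rw [show I v x + (I (u k) x - I v x) = I (u k) x by ring]
              _ ≤ |I v x| + |I (u k) x - I v x| := abs_add_le _ _)
          mq
          (by
            refine MemLp.of_le ((mA.const_mul 2).add mB1) ah.aestronglyMeasurable ?_
            filter_upwards with x
            rw [Real.norm_eq_abs, abs_abs, Pi.add_apply, Real.norm_eq_abs]
            have h1 : (0:ℝ) ≤ 2 * |I (u k) x| + |I (u k) x + 1 * I v x| := by positivity
            rw [abs_of_nonneg h1]
            calc |I (u k) x - I v x|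
                = |2 * I (u k) x - (I (u k) x + 1 * I v x)| := by
                  rw [show 2 * I (u k) x - (I (u k) x + 1 * I v x) = I (u k) x - I v x by ring]
              _ ≤ |2 * I (u k) x| + |I (u k) x + 1 * I v x| := abs_sub _ _
              _ = 2 * |I (u k) x| + |I (u k) x + 1 * I v x| := by
                  rw [abs_mul]; norm_num)
          aA.aestronglyMeasurable
        exact hmink
      -- pass to the limit
      have hL : Tendsto (fun k => F (u k) ^ p⁻¹) atTop (𝓝 1) := by
        have h := hFu1.rpow_const (Or.inr (inv_nonneg.mpr hp0.le))
        rwa [Real.one_rpow] at h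
      have hR : Tendsto (fun k => (∫ x, |I v x| ^ p ∂μ) ^ p⁻¹ +
          (∫ x, |I (u k) x - I v x| ^ p ∂μ) ^ p⁻¹) atTop
          (𝓝 ((∫ x, |I v x| ^ p ∂μ) ^ p⁻¹ + 0)) := by
        apply tendsto_const_nhds.add
        have h := hcp.rpow_const (Or.inr (inv_nonneg.mpr hp0.le))
        rwa [Real.zero_rpow (inv_ne_zero hp0')] at h
      have h1le : (1:ℝ) ≤ (∫ x, |I v x| ^ p ∂μ) ^ p⁻¹ := by
        have h := le_of_tendsto_of_tendsto hL hR hineq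
        simpa using h
      have hFv1 : 1 ≤ F v := by
        have h := Real.rpow_le_rpow (by norm_num) h1le hp0.le
        rw [Real.one_rpow, ← Real.rpow_mul (hFnn v), inv_mul_cancel₀ hp0',
          Real.rpow_one] at h
        exact h
      have hv1 : ‖v‖ ^ p ≤ 1 := by
        have h := Real.rpow_le_rpow (norm_nonneg v) hvle hp0.le
        rwa [Real.one_rpow] at h
      have h := hnorm' v
      linarith
  exact hvne (hwin v hEv hGv)
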